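/- Let m ≥ 2 and let P(x) = cos(m·arccos(2^{−(m−1)/m} x)) be the normalized Chebyshev polynomial. Then the curve {y² + 2yP(x) + 1 = 0} ⊂ ℂ² has exactly m−1 singular points, all of which are real solitary nodes (locally of the form u² + v² = 0 in real coordinates). -/

import Mathlib

/-- Second derivative of `F` at `z` as a bilinear expression. -/
noncomputable def D2 (F : ℂ × ℂ → ℂ) (z v w : ℂ × ℂ) : ℂ :=
  iteratedFDeriv ℂ 2 F z ![v, w]

/-- Third derivative of `F` at `z` as a trilinear expression. -/
noncomputable def D3 (F : ℂ × ℂ → ℂ) (z v w u : ℂ × ℂ) : ℂ :=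
  iteratedFDeriv ℂ 3 F z ![v, w, u]

/-- `z` is a singular point of the plane curve `{F = 0}`. -/
def IsSingularAt (F : ℂ × ℂ → ℂ) (z : ℂ × ℂ) : Prop :=
  F z = 0 ∧ fderiv ℂ F z = 0

/-- `z` is a node (A₁ singularity) of `{F = 0}`: a singular point with nondegenerate
Hessian. -/
def IsNode (F : ℂ × ℂ → ℂ) (z : ℂ × ℂ) : Prop :=
  IsSingularAt F z ∧
    D2 F z (1, 0) (1, 0) * D2 F z (0, 1) (0, 1) - D2 F z (1, 0) (0, 1) ^ 2 ≠ 0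

/-- `z` is an ordinary cusp (A₂ singularity) of `{F = 0}`: a singular point whose Hessian
has rank one, with nonvanishing third derivative along the kernel direction. -/
def IsOrdinaryCusp (F : ℂ × ℂ → ℂ) (z : ℂ × ℂ) : Prop :=
  IsSingularAt F z ∧ iteratedFDeriv ℂ 2 F z ≠ 0 ∧
    ∃ v : ℂ × ℂ, v ≠ 0 ∧ (∀ w : ℂ × ℂ, D2 F z v w = 0) ∧ D3 F z v v v ≠ 0

/-- Real second derivative of `F` at `z` as a bilinear expression. -/
noncomputable def D2R (F : ℝ × ℝ → ℝ) (z v w : ℝ × ℝ) : ℝ :=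
  iteratedFDeriv ℝ 2 F z ![v, w]

open Polynomial ContinuousLinearMap

variable {K : Type*} [NontriviallyNormedField K]

/-- The linear map sending `(a,b)` to the functional `v ↦ a*v.1 + b*v.2`. -/
noncomputable def Lm (K : Type*) [NontriviallyNormedField K] :
    (K × K) →L[K] ((K × K) →L[K] K) :=
  (fst K K K).smulRight (fst K K K) + (snd K K K).smulRight (snd K K K)

lemma Lm_apply (a b : K) (v : K × K) : Lm K (a, b) v = a * v.1 + b * v.2 := by
  simp [Lm, smul_eq_mul]

lemma aux_mul (q : K[X]) (z : K × K) :
    HasFDerivAt (fun z : K × K => 2 * z.2 * q.eval z.1)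
      (Lm K (2 * z.2 * q.derivative.eval z.1, 2 * q.eval z.1)) z := by
  have h1 : HasFDerivAt (fun z : K × K => z.2) (snd K K K) z := hasFDerivAt_snd
  have h2 : HasFDerivAt (fun z : K × K => q.eval z.1) ((q.derivative.eval z.1) • fst K K K) z :=
    (q.hasDerivAt z.1).comp_hasFDerivAt z hasFDerivAt_fst
  have h3 := (h1.const_mul 2).mul h2
  refine h3.congr_fderiv ?_
  refine ContinuousLinearMap.ext fun v => ?_
  simp [Lm_apply, smul_eq_mul]
  ring

lemma aux_add (p : K[X]) (z : K × K) :
    HasFDerivAt (fun z : K × K => 2 * z.2 + 2 * p.eval z.1)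
      (Lm K (2 * p.derivative.eval z.1, (2 : K))) z := by
  have h1 : HasFDerivAt (fun z : K × K => z.2) (snd K K K) z := hasFDerivAt_snd
  have h2 : HasFDerivAt (fun z : K × K => p.eval z.1) ((p.derivative.eval z.1) • fst K K K) z :=
    (p.hasDerivAt z.1).comp_hasFDerivAt z hasFDerivAt_fst
  have h3 := (h1.const_mul 2).add (h2.const_mul 2)
  refine h3.congr_fderiv ?_
  refine ContinuousLinearMap.ext fun v => ?_
  simp [Lm_apply, smul_eq_mul]
  ring

lemma hasFDerivAt_poly2 (p : K[X]) (z : K × K) :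
    HasFDerivAt (fun z : K × K => z.2 ^ 2 + 2 * z.2 * p.eval z.1 + 1)
      (Lm K (2 * z.2 * p.derivative.eval z.1, 2 * z.2 + 2 * p.eval z.1)) z := by
  have h1 : HasFDerivAt (fun z : K × K => z.2) (snd K K K) z := hasFDerivAt_snd
  have hsq : HasFDerivAt (fun z : K × K => z.2 ^ 2) (Lm K (0, 2 * z.2)) z := by
    have := h1.mul h1
    have h' : HasFDerivAt (fun z : K × K => z.2 * z.2) (Lm K (0, 2 * z.2)) z := by
      refine this.congr_fderiv ?_
      refine ContinuousLinearMap.ext fun v => ?_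
      simp [Lm_apply, smul_eq_mul]
      ring
    simpa only [pow_two] using h'
  have h3 := (hsq.add (aux_mul p z)).add_const 1
  refine h3.congr_fderiv ?_
  refine ContinuousLinearMap.ext fun v => ?_
  simp [Lm_apply, smul_eq_mul]
  ring

lemma fderiv_poly2 (p : K[X]) :
    (fderiv K (fun z : K × K => z.2 ^ 2 + 2 * z.2 * p.eval z.1 + 1)) =
      fun z => Lm K (2 * z.2 * p.derivative.eval z.1, 2 * z.2 + 2 * p.eval z.1) :=
  funext fun z => (hasFDerivAt_poly2 p z).fderiv

lemma iter2_poly2 (p : K[X]) (z v w : K × K) :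
    iteratedFDeriv K 2 (fun z : K × K => z.2 ^ 2 + 2 * z.2 * p.eval z.1 + 1) z ![v, w] =
      (2 * z.2 * p.derivative.derivative.eval z.1 * v.1 + 2 * p.derivative.eval z.1 * v.2) * w.1
        + (2 * p.derivative.eval z.1 * v.1 + 2 * v.2) * w.2 := by
  rw [iteratedFDeriv_two_apply, fderiv_poly2]
  have hg := aux_mul (K := K) p.derivative z
  have hh := aux_add (K := K) p z
  have hpair : HasFDerivAt
      (fun z : K × K => ((2 * z.2 * p.derivative.eval z.1 : K), (2 * z.2 + 2 * p.eval z.1 : K)))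
      ((Lm K (2 * z.2 * p.derivative.derivative.eval z.1, 2 * p.derivative.eval z.1)).prod
        (Lm K (2 * p.derivative.eval z.1, (2 : K)))) z := hg.prodMk hh
  have hcomp := (Lm K).hasFDerivAt.comp z hpair
  have : fderiv K
      (fun z : K × K => Lm K (2 * z.2 * p.derivative.eval z.1, 2 * z.2 + 2 * p.eval z.1)) z =
      (Lm K).comp ((Lm K (2 * z.2 * p.derivative.derivative.eval z.1,
        2 * p.derivative.eval z.1)).prod (Lm K (2 * p.derivative.eval z.1, (2 : K)))) :=
    hcomp.fderiv
  rw [show (![v, w] : Fin 2 → K × K) 0 = v from rfl, show (![v, w] : Fin 2 → K × K) 1 = w from rfl,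
    this]
  simp only [coe_comp', Function.comp_apply, prod_apply]
  rw [show ((Lm K (2 * z.2 * p.derivative.derivative.eval z.1, 2 * p.derivative.eval z.1)) v,
      (Lm K (2 * p.derivative.eval z.1, (2:K))) v) =
      ((Lm K (2 * z.2 * p.derivative.derivative.eval z.1, 2 * p.derivative.eval z.1)) v,
      (Lm K (2 * p.derivative.eval z.1, (2:K))) v) from rfl]
  rw [Lm_apply, Lm_apply, Lm_apply]

open Polynomial ContinuousLinearMap

section ChebAnalysis

/-- First-derivative consequence of the Chebyshev functional equation. -/
lemma cheb_step1 (m : ℕ) (c : ℝ) (P : ℝ[X])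
    (hcheb : ∀ θ : ℝ, P.eval (c * Real.cos θ) = Real.cos (m * θ)) (θ : ℝ) :
    P.derivative.eval (c * Real.cos θ) * (c * Real.sin θ) = (m : ℝ) * Real.sin (m * θ) := by
  have h1 : HasDerivAt (fun θ : ℝ => P.eval (c * Real.cos θ))
      (P.derivative.eval (c * Real.cos θ) * (c * -Real.sin θ)) θ := by
    have := (P.hasDerivAt (c * Real.cos θ)).comp θ ((Real.hasDerivAt_cos θ).const_mul c)
    simpa [Function.comp_def] using this
  have h2 : HasDerivAt (fun θ : ℝ => P.eval (c * Real.cos θ))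
      (-Real.sin ((m : ℝ) * θ) * ((m : ℝ) * 1)) θ := by
    have hb : HasDerivAt (fun θ : ℝ => Real.cos ((m : ℝ) * θ))
        (-Real.sin ((m : ℝ) * θ) * ((m : ℝ) * 1)) θ := by
      have := (Real.hasDerivAt_cos ((m : ℝ) * θ)).comp θ ((hasDerivAt_id θ).const_mul (m : ℝ))
      simpa [Function.comp_def] using this
    exact hb.congr_of_eventuallyEq (Filter.Eventually.of_forall fun θ => hcheb θ)
  have := h1.unique h2
  linear_combination -this

/-- Second-derivative consequence of the Chebyshev functional equation. -/
lemma cheb_step2 (m : ℕ) (c : ℝ) (P : ℝ[X])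
    (hcheb : ∀ θ : ℝ, P.eval (c * Real.cos θ) = Real.cos (m * θ)) (θ : ℝ) :
    P.derivative.derivative.eval (c * Real.cos θ) * (c * Real.sin θ) ^ 2 =
      P.derivative.eval (c * Real.cos θ) * (c * Real.cos θ) - (m : ℝ) ^ 2 * Real.cos (m * θ) := by
  have h1 : HasDerivAt (fun θ : ℝ => P.derivative.eval (c * Real.cos θ) * (c * -Real.sin θ))
      (P.derivative.derivative.eval (c * Real.cos θ) * (c * -Real.sin θ) * (c * -Real.sin θ)
        + P.derivative.eval (c * Real.cos θ) * (c * -Real.cos θ)) θ := by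
    have ha : HasDerivAt (fun θ : ℝ => P.derivative.eval (c * Real.cos θ))
        (P.derivative.derivative.eval (c * Real.cos θ) * (c * -Real.sin θ)) θ := by
      have := (P.derivative.hasDerivAt (c * Real.cos θ)).comp θ
        ((Real.hasDerivAt_cos θ).const_mul c)
      simpa [Function.comp_def] using this
    have hb : HasDerivAt (fun θ : ℝ => c * -Real.sin θ) (c * -Real.cos θ) θ :=
      (Real.hasDerivAt_sin θ).neg.const_mul c
    exact ha.mul hb
  have h2 : HasDerivAt (fun θ : ℝ => P.derivative.eval (c * Real.cos θ) * (c * -Real.sin θ))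
      (-(Real.cos ((m : ℝ) * θ) * ((m : ℝ) * 1)) * m) θ := by
    have hs : HasDerivAt (fun θ : ℝ => Real.sin ((m : ℝ) * θ))
        (Real.cos ((m : ℝ) * θ) * ((m : ℝ) * 1)) θ := by
      have := (Real.hasDerivAt_sin ((m : ℝ) * θ)).comp θ ((hasDerivAt_id θ).const_mul (m : ℝ))
      simpa [Function.comp_def] using this
    have hb := (hs.neg).mul_const (m : ℝ)
    refine hb.congr_of_eventuallyEq (Filter.Eventually.of_forall fun θ => ?_)
    have := cheb_step1 m c P hcheb θ
    simp only [Pi.neg_apply]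
    linear_combination -this
  have := h1.unique h2
  linear_combination this

/-- Values and derivatives of the Chebyshev polynomial at critical points. -/
lemma cheb_key (m : ℕ) (hm : 2 ≤ m) (c : ℝ) (hc : 0 < c) (P : ℝ[X])
    (hcheb : ∀ θ : ℝ, P.eval (c * Real.cos θ) = Real.cos (m * θ))
    (k : ℕ) (hk : k ∈ Finset.Ioo 0 m) :
    P.eval (c * Real.cos (k * Real.pi / m)) = (-1) ^ k ∧
    P.derivative.eval (c * Real.cos (k * Real.pi / m)) = 0 ∧
    P.eval (c * Real.cos (k * Real.pi / m)) *
      P.derivative.derivative.eval (c * Real.cos (k * Real.pi / m)) < 0 := by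
  obtain ⟨hk0, hkm⟩ := Finset.mem_Ioo.1 hk
  have hm0 : (0 : ℝ) < m := by exact_mod_cast (by omega : 0 < m)
  have hk0' : (0 : ℝ) < k := by exact_mod_cast hk0
  have hkm' : (k : ℝ) < m := by exact_mod_cast hkm
  set θ : ℝ := k * Real.pi / m with hθdef
  have hmθ : (m : ℝ) * θ = k * Real.pi := by
    rw [hθdef]; field_simp
  have hsinm : Real.sin ((m : ℝ) * θ) = 0 := by rw [hmθ]; exact Real.sin_nat_mul_pi k
  have hcosm : Real.cos ((m : ℝ) * θ) = (-1) ^ k := by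
    rw [hmθ]
    have := Real.cos_nat_mul_pi_sub 0 k
    simpa using this
  have hθ0 : 0 < θ := by
    rw [hθdef]
    have := Real.pi_pos
    positivity
  have hθπ : θ < Real.pi := by
    rw [hθdef, div_lt_iff₀ hm0]
    have := Real.pi_pos
    nlinarith
  have hs : 0 < Real.sin θ := Real.sin_pos_of_pos_of_lt_pi hθ0 hθπ
  have hval : P.eval (c * Real.cos θ) = (-1) ^ k := by rw [hcheb θ, hcosm]
  have hd1 : P.derivative.eval (c * Real.cos θ) = 0 := by
    have h := cheb_step1 m c P hcheb θ
    rw [hsinm] at h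
    have hcs : c * Real.sin θ ≠ 0 := by positivity
    have := mul_eq_zero.1 (by linarith [h] : P.derivative.eval (c * Real.cos θ) * (c * Real.sin θ) = 0)
    tauto
  refine ⟨hval, hd1, ?_⟩
  have h2 := cheb_step2 m c P hcheb θ
  rw [hd1, hcosm] at h2
  have he : ((-1 : ℝ) ^ k) ^ 2 = 1 := by
    rw [← pow_mul, mul_comm, pow_mul]; norm_num
  have hmain : P.eval (c * Real.cos θ) * P.derivative.derivative.eval (c * Real.cos θ) *
      (c * Real.sin θ) ^ 2 = -(m : ℝ) ^ 2 := by
    rw [hval]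
    linear_combination ((-1 : ℝ) ^ k) * h2 - (m : ℝ) ^ 2 * he
  have hcs2 : 0 < (c * Real.sin θ) ^ 2 := by positivity
  nlinarith [hmain, hcs2, hm0]

/-- The critical points are pairwise distinct. -/
lemma cheb_inj (m : ℕ) (hm : 2 ≤ m) (c : ℝ) (hc : 0 < c) :
    Set.InjOn (fun k : ℕ => c * Real.cos (k * Real.pi / m)) ↑(Finset.Ioo 0 m) := by
  intro j hj k hk h
  simp only [Finset.coe_Ioo, Set.mem_Ioo, Finset.mem_coe, Finset.mem_Ioo] at hj hk
  have hm0 : (0 : ℝ) < m := by exact_mod_cast (by omega : 0 < m)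
  have hcos : Real.cos (j * Real.pi / m) = Real.cos (k * Real.pi / m) :=
    mul_left_cancel₀ (ne_of_gt hc) h
  have hpi := Real.pi_pos
  have hmem : ∀ i : ℕ, i < m → (i : ℝ) * Real.pi / m ∈ Set.Icc 0 Real.pi := by
    intro i hi
    constructor
    · positivity
    · rw [div_le_iff₀ hm0]
      have : (i : ℝ) ≤ m := by exact_mod_cast hi.le
      nlinarith
  have := Real.injOn_cos (hmem j hj.2) (hmem k hk.2) hcos
  have hπm : Real.pi / m ≠ 0 := by positivity
  rw [mul_div_assoc, mul_div_assoc] at this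
  have := mul_right_cancel₀ hπm this
  exact_mod_cast this

end ChebAnalysis

/-- for the normalized Chebyshev polynomial P of degree m, the curve
{y² + 2yP(x) + 1 = 0} has exactly m − 1 singular points in ℂ², all of which are nodes
with real coordinates, solitary over ℝ (positive-definite real Hessian determinant). -/
theorem chebyshev_deformation_pattern_solitary_nodes
    (m : ℕ) (hm : 2 ≤ m) (P : Polynomial ℝ) (hdeg : P.natDegree = m)
    (hcheb : ∀ θ : ℝ,
      P.eval ((2 : ℝ) ^ (((m : ℝ) - 1) / (m : ℝ)) * Real.cos θ) = Real.cos (m * θ))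
    (Fc : ℂ × ℂ → ℂ)
    (hFc : ∀ z : ℂ × ℂ, Fc z = z.2 ^ 2 + 2 * z.2 * (Polynomial.aeval z.1) P + 1)
    (Fr : ℝ × ℝ → ℝ)
    (hFr : ∀ w : ℝ × ℝ, Fr w = w.2 ^ 2 + 2 * w.2 * P.eval w.1 + 1) :
    Set.ncard {z : ℂ × ℂ | IsSingularAt Fc z} = m - 1 ∧
    ∀ z : ℂ × ℂ, IsSingularAt Fc z → IsNode Fc z ∧
      ∃ w : ℝ × ℝ, z = ((w.1 : ℂ), (w.2 : ℂ)) ∧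
        0 < D2R Fr w (1, 0) (1, 0) * D2R Fr w (0, 1) (0, 1) - D2R Fr w (1, 0) (0, 1) ^ 2 := by
  set c : ℝ := (2 : ℝ) ^ (((m : ℝ) - 1) / (m : ℝ)) with hcdef
  have hc : 0 < c := by rw [hcdef]; positivity
  set XX : ℕ → ℝ := fun k => c * Real.cos (k * Real.pi / m) with hXdef
  set Q : Polynomial ℂ := P.map (algebraMap ℝ ℂ) with hQdef
  have hkey : ∀ k ∈ Finset.Ioo 0 m,
      P.eval (XX k) = (-1) ^ k ∧ P.derivative.eval (XX k) = 0 ∧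
      P.eval (XX k) * P.derivative.derivative.eval (XX k) < 0 :=
    fun k hk => cheb_key m hm c hc P hcheb k hk
  have hinj : Set.InjOn XX ↑(Finset.Ioo 0 m) := cheb_inj m hm c hc
  -- cast lemmas
  have hQx : ∀ x : ℝ, Q.eval (x : ℂ) = ((P.eval x : ℝ) : ℂ) := by
    intro x
    show Polynomial.eval (algebraMap ℝ ℂ x) Q = algebraMap ℝ ℂ (P.eval x)
    rw [hQdef, Polynomial.eval_map, Polynomial.eval₂_at_apply]
  have hQd : Q.derivative = P.derivative.map (algebraMap ℝ ℂ) := by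
    rw [hQdef, Polynomial.derivative_map]
  have hQdx : ∀ x : ℝ, Q.derivative.eval (x : ℂ) = ((P.derivative.eval x : ℝ) : ℂ) := by
    intro x
    show Polynomial.eval (algebraMap ℝ ℂ x) Q.derivative = algebraMap ℝ ℂ (P.derivative.eval x)
    rw [hQd, Polynomial.eval_map, Polynomial.eval₂_at_apply]
  have hQddx : ∀ x : ℝ,
      Q.derivative.derivative.eval (x : ℂ) = ((P.derivative.derivative.eval x : ℝ) : ℂ) := by
    intro x
    show Polynomial.eval (algebraMap ℝ ℂ x) Q.derivative.derivative =
      algebraMap ℝ ℂ (P.derivative.derivative.eval x)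
    rw [hQd, Polynomial.derivative_map, Polynomial.eval_map, Polynomial.eval₂_at_apply]
  have hFcEq : Fc = fun z : ℂ × ℂ => z.2 ^ 2 + 2 * z.2 * Q.eval z.1 + 1 := by
    funext z
    rw [hFc z]
    simp only [hQdef, Polynomial.eval_map, ← Polynomial.aeval_def]
  have haev : ∀ z1 : ℂ, (Polynomial.aeval z1) P = Q.eval z1 := by
    intro z1
    simp only [hQdef, Polynomial.eval_map, ← Polynomial.aeval_def]
  -- degrees and root confinement
  have hPdeg_pos : 0 < P.natDegree := by rw [hdeg]; omega
  have hPd_deg : P.derivative.degree = ((m - 1 : ℕ) : WithBot ℕ) := by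
    have := Polynomial.degree_derivative_eq P hPdeg_pos
    rwa [hdeg] at this
  have hPd_ne : P.derivative ≠ 0 := by
    intro h
    rw [h, Polynomial.degree_zero] at hPd_deg
    simp at hPd_deg
  have hPd_nat : P.derivative.natDegree = m - 1 :=
    Polynomial.natDegree_eq_of_degree_eq_some hPd_deg
  have hQd_ne : Q.derivative ≠ 0 := by
    rw [hQd]; exact Polynomial.map_ne_zero hPd_ne
  have hQd_nat : Q.derivative.natDegree = m - 1 := by
    rw [hQd, Polynomial.natDegree_map]; exact hPd_nat
  set T : Finset ℂ := (Finset.Ioo 0 m).image (fun k => ((XX k : ℝ) : ℂ)) with hTdef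
  have hTcard : T.card = m - 1 := by
    rw [hTdef, Finset.card_image_of_injOn
      (fun a ha b hb h => hinj ha hb (Complex.ofReal_injective h)), Nat.card_Ioo]
    omega
  have hXroot : ∀ k ∈ Finset.Ioo 0 m, Q.derivative.eval ((XX k : ℝ) : ℂ) = 0 := by
    intro k hk
    rw [hQdx, (hkey k hk).2.1]
    exact Complex.ofReal_zero
  have hconfine : ∀ y : ℂ, Q.derivative.eval y = 0 → y ∈ T := by
    intro y hy
    by_contra hyT
    have hmem : insert y T ⊆ Q.derivative.roots.toFinset := by
      intro u hu
      rw [Multiset.mem_toFinset, Polynomial.mem_roots hQd_ne]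
      rcases Finset.mem_insert.1 hu with rfl | hu
      · exact hy
      · rw [hTdef] at hu
        obtain ⟨k, hk, rfl⟩ := Finset.mem_image.1 hu
        exact hXroot k hk
    have hcard := Finset.card_le_card hmem
    rw [Finset.card_insert_of_notMem hyT, hTcard] at hcard
    have h2 := Multiset.toFinset_card_le Q.derivative.roots
    have h3 := Polynomial.card_roots' Q.derivative
    rw [hQd_nat] at h3
    omega
  have hfder : ∀ z : ℂ × ℂ,
      fderiv ℂ Fc z = Lm ℂ (2 * z.2 * Q.derivative.eval z.1, 2 * z.2 + 2 * Q.eval z.1) := by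
    intro z
    rw [hFcEq]
    exact (hasFDerivAt_poly2 Q z).fderiv
  have hek : ∀ k : ℕ, ((-1 : ℂ) ^ k) ^ 2 = 1 := fun k => by
    rw [← pow_mul, mul_comm, pow_mul]; norm_num
  -- the singular set
  have hset : {z : ℂ × ℂ | IsSingularAt Fc z} =
      (fun k : ℕ => (((XX k : ℝ) : ℂ), -(-1 : ℂ) ^ k)) '' ↑(Finset.Ioo 0 m) := by
    ext z
    simp only [Set.mem_setOf_eq, Set.mem_image, Finset.mem_coe]
    constructor
    · rintro ⟨h0, h1⟩
      rw [hfder z] at h1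
      have e1 : 2 * z.2 * Q.derivative.eval z.1 = 0 := by
        have := congrArg (fun L : (ℂ × ℂ) →L[ℂ] ℂ => L ((1 : ℂ), (0 : ℂ))) h1
        simpa [Lm_apply] using this
      have e2 : z.2 = -Q.eval z.1 := by
        have := congrArg (fun L : (ℂ × ℂ) →L[ℂ] ℂ => L ((0 : ℂ), (1 : ℂ))) h1
        simp only [Lm_apply, ContinuousLinearMap.zero_apply, mul_zero, mul_one, zero_add] at this
        linear_combination this / 2
      rw [hFc z, haev z.1] at h0
      have hQ2 : Q.eval z.1 ^ 2 = 1 := by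
        rw [e2] at h0
        linear_combination -h0
      have hz2 : z.2 ≠ 0 := by
        rw [e2, neg_ne_zero]
        intro h
        rw [h] at hQ2
        simp at hQ2
      have hQ' : Q.derivative.eval z.1 = 0 := by
        rcases mul_eq_zero.1 e1 with h | h
        · rcases mul_eq_zero.1 h with h' | h'
          · norm_num at h'
          · exact absurd h' hz2
        · exact h
      have hz1T : z.1 ∈ T := hconfine z.1 hQ'
      rw [hTdef] at hz1T
      obtain ⟨k, hk, hxk⟩ := Finset.mem_image.1 hz1T
      refine ⟨k, hk, ?_⟩
      have hQval : Q.eval z.1 = (-1 : ℂ) ^ k := by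
        rw [← hxk, hQx, (hkey k hk).1]
        push_cast
        ring
      exact Prod.ext hxk (by rw [e2, hQval])
    · rintro ⟨k, hk, rfl⟩
      have hq' : Q.derivative.eval ((XX k : ℝ) : ℂ) = 0 := hXroot k hk
      have hqv : Q.eval ((XX k : ℝ) : ℂ) = (-1 : ℂ) ^ k := by
        rw [hQx, (hkey k hk).1]
        push_cast
        ring
      constructor
      · rw [hFc _, haev]
        simp only [hqv]
        linear_combination -(hek k)
      · rw [hfder]
        have hpair : ((2 * ((((XX k : ℝ) : ℂ), -(-1 : ℂ) ^ k) : ℂ × ℂ).2 *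
            Q.derivative.eval ((((XX k : ℝ) : ℂ), -(-1 : ℂ) ^ k) : ℂ × ℂ).1,
            2 * ((((XX k : ℝ) : ℂ), -(-1 : ℂ) ^ k) : ℂ × ℂ).2 +
            2 * Q.eval ((((XX k : ℝ) : ℂ), -(-1 : ℂ) ^ k) : ℂ × ℂ).1) : ℂ × ℂ) = 0 := by
          simp only [hq', hqv]
          rw [Prod.ext_iff]
          constructor <;> simp
        rw [hpair]
        exact map_zero _
  refine ⟨?_, ?_⟩
  · have hinjP : Set.InjOn (fun k : ℕ => (((XX k : ℝ) : ℂ), -(-1 : ℂ) ^ k))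
        ↑(Finset.Ioo 0 m) := by
      intro a ha b hb h
      have h1 : ((XX a : ℝ) : ℂ) = ((XX b : ℝ) : ℂ) := congrArg Prod.fst h
      exact hinj ha hb (Complex.ofReal_injective h1)
    rw [hset, Set.ncard_image_of_injOn hinjP, Set.ncard_coe_finset, Nat.card_Ioo]
    omega
  · intro z hz
    have hz' : z ∈ (fun k : ℕ => (((XX k : ℝ) : ℂ), -(-1 : ℂ) ^ k)) '' ↑(Finset.Ioo 0 m) := by
      rw [← hset]; exact hz
    obtain ⟨k, hkc, rfl⟩ := hz'
    have hk : k ∈ Finset.Ioo 0 m := Finset.mem_coe.1 hkc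
    obtain ⟨hval, hd1, hd2⟩ := hkey k hk
    have hq' : Q.derivative.eval ((XX k : ℝ) : ℂ) = 0 := hXroot k hk
    have hq'' : Q.derivative.derivative.eval ((XX k : ℝ) : ℂ) =
        ((P.derivative.derivative.eval (XX k) : ℝ) : ℂ) := hQddx (XX k)
    have hcast : (-1 : ℂ) ^ k = ((P.eval (XX k) : ℝ) : ℂ) := by
      rw [hval]; push_cast; ring
    have hD2 : ∀ v w : ℂ × ℂ, D2 Fc (((XX k : ℝ) : ℂ), -(-1 : ℂ) ^ k) v w =
        (2 * (-(-1 : ℂ) ^ k) * Q.derivative.derivative.eval ((XX k : ℝ) : ℂ) * v.1 +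
          2 * Q.derivative.eval ((XX k : ℝ) : ℂ) * v.2) * w.1 +
        (2 * Q.derivative.eval ((XX k : ℝ) : ℂ) * v.1 + 2 * v.2) * w.2 := by
      intro v w
      simp only [D2]
      rw [hFcEq]
      exact iter2_poly2 Q (((XX k : ℝ) : ℂ), -(-1 : ℂ) ^ k) v w
    have hdet : D2 Fc (((XX k : ℝ) : ℂ), -(-1 : ℂ) ^ k) (1, 0) (1, 0) *
          D2 Fc (((XX k : ℝ) : ℂ), -(-1 : ℂ) ^ k) (0, 1) (0, 1) -
          D2 Fc (((XX k : ℝ) : ℂ), -(-1 : ℂ) ^ k) (1, 0) (0, 1) ^ 2 =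
        (((-4 : ℝ) * (P.eval (XX k) * P.derivative.derivative.eval (XX k)) : ℝ) : ℂ) := by
      rw [hD2, hD2, hD2]
      simp only [hq', hq'', hcast]
      push_cast
      ring
    have hdetpos : (0 : ℝ) < (-4 : ℝ) * (P.eval (XX k) * P.derivative.derivative.eval (XX k)) := by
      nlinarith
    constructor
    · refine ⟨hz, ?_⟩
      rw [hdet]
      rw [Complex.ofReal_ne_zero]
      exact ne_of_gt hdetpos
    · refine ⟨(XX k, -(-1 : ℝ) ^ k), ?_, ?_⟩
      · rw [Prod.ext_iff]
        constructor
        · rfl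
        · push_cast
          ring
      · have hFrEq : Fr = fun w : ℝ × ℝ => w.2 ^ 2 + 2 * w.2 * P.eval w.1 + 1 := funext hFr
        have hD2R : ∀ v u : ℝ × ℝ, D2R Fr (XX k, -(-1 : ℝ) ^ k) v u =
            (2 * (-(-1 : ℝ) ^ k) * P.derivative.derivative.eval (XX k) * v.1 +
              2 * P.derivative.eval (XX k) * v.2) * u.1 +
            (2 * P.derivative.eval (XX k) * v.1 + 2 * v.2) * u.2 := by
          intro v u
          simp only [D2R]
          rw [hFrEq]
          exact iter2_poly2 P (XX k, -(-1 : ℝ) ^ k) v u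
        rw [hD2R, hD2R, hD2R]
        simp only [hd1]
        have hv : -(-1 : ℝ) ^ k = -P.eval (XX k) := by rw [hval]
        rw [hv]
        nlinarith
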